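/- arXiv:1105.4179 — 4 statements merged into one kernel-verified Lean document; each statement's English description precedes it below -/
import Mathlib

section
/- Let f : ℝ → ℝ be continuously differentiable with compact support and let x ∈ ℝ. Then ∫_ℝ ln|x − y| · f'(y) dy = lim_{ε→0⁺} ∫_{|x − y| ≥ ε} f(y)/(x − y) dy. That is, the Hilbert transform of the second form (with the real logarithmic kernel ln|x − y|) equals the principal-value Hilbert integral of f, with no principal value needed on the logarithmic side. -/
open MeasureTheory Filter Topology Set

private lemma logabs_bound {t : ℝ} (ht : 0 < t) :
    ‖Real.log t‖ ≤ 2 * t ^ (-(1:ℝ)/2) + t := by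
  have hrpow : t ^ (-(1:ℝ)/2) = (Real.sqrt t)⁻¹ := by
    rw [Real.sqrt_eq_rpow, ← Real.rpow_neg ht.le]
    norm_num
  rcases le_or_gt t 1 with h1 | h1
  · have hlog : Real.log t ≤ 0 := Real.log_nonpos ht.le h1
    rw [Real.norm_eq_abs, abs_of_nonpos hlog]
    have hsq : 0 < Real.sqrt t := Real.sqrt_pos.2 ht
    have h2 : Real.log (Real.sqrt t)⁻¹ ≤ (Real.sqrt t)⁻¹ - 1 :=
      Real.log_le_sub_one_of_pos (by positivity)
    have h3 : Real.log (Real.sqrt t)⁻¹ = -(Real.log t / 2) := by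
      rw [Real.log_inv, Real.log_sqrt ht.le]
    nlinarith [inv_nonneg.2 hsq.le, ht.le]
  · have hlog : 0 ≤ Real.log t := Real.log_nonneg h1.le
    rw [Real.norm_eq_abs, abs_of_nonneg hlog]
    have h2 : Real.log t ≤ t - 1 := Real.log_le_sub_one_of_pos ht
    have : (0:ℝ) ≤ t ^ (-(1:ℝ)/2) := by
      rw [hrpow]; positivity
    linarith

private lemma intervalIntegrable_log_abs (a b : ℝ) :
    IntervalIntegrable (fun t => Real.log |t|) volume a b := by
  have key : ∀ c : ℝ, 0 ≤ c → IntervalIntegrable (fun t => Real.log |t|) volume 0 c := by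
    intro c hc
    rw [intervalIntegrable_iff, uIoc_of_le hc]
    have hbound : IntegrableOn (fun t : ℝ => 2 * t ^ (-(1:ℝ)/2) + t) (Ioc 0 c) volume := by
      have h1 : IntervalIntegrable (fun t : ℝ => 2 * t ^ (-(1:ℝ)/2) + t) volume 0 c := by
        exact ((intervalIntegral.intervalIntegrable_rpow' (by norm_num)).const_mul 2).add
          (continuous_id.intervalIntegrable _ _)
      rwa [intervalIntegrable_iff, uIoc_of_le hc] at h1
    apply Integrable.mono' hbound
    · exact ((Real.measurable_log.comp measurable_abs).aestronglyMeasurable).restrict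
    · refine (ae_restrict_iff' measurableSet_Ioc).2 (ae_of_all _ fun t ht => ?_)
      rw [abs_of_pos ht.1]
      exact logabs_bound ht.1
  have key2 : ∀ c : ℝ, IntervalIntegrable (fun t => Real.log |t|) volume 0 c := by
    intro c
    rcases le_or_gt 0 c with hc | hc
    · exact key c hc
    · have h := (key (-c) (by linarith)).comp_sub_left 0
      simp only [zero_sub, neg_neg, abs_neg, sub_zero, neg_zero] at h
      exact h
  exact (key2 a).symm.trans (key2 b)

private lemma integrable_log_kernel (φ : ℝ → ℝ) (hc : Continuous φ)
    (hs : HasCompactSupport φ) (x : ℝ) :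
    Integrable (fun y => Real.log |x - y| * φ y) := by
  obtain ⟨R₀, hR₀⟩ := hs.isCompact.isBounded.subset_closedBall x
  set R : ℝ := max R₀ 0 + 1 with hR
  have hzero : ∀ y, y ∉ Icc (x - R) (x + R) → φ y = 0 := by
    intro y hy
    apply image_eq_zero_of_notMem_tsupport
    intro hmem
    have := hR₀ hmem
    rw [Metric.mem_closedBall, Real.dist_eq] at this
    simp only [mem_Icc, not_and_or, not_le] at hy
    rcases hy with h | h
    · have h1 : R₀ ≤ max R₀ 0 := le_max_left _ _
      rcases abs_le.1 this with ⟨hl, hr⟩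
      simp only [hR] at h; linarith
    · have h1 : R₀ ≤ max R₀ 0 := le_max_left _ _
      rcases abs_le.1 this with ⟨hl, hr⟩
      simp only [hR] at h; linarith
  obtain ⟨C, hC⟩ := hs.exists_bound_of_continuous hc
  have hint : IntegrableOn (fun y => Real.log |x - y| * φ y) (Icc (x - R) (x + R)) := by
    have hli : IntervalIntegrable (fun y => Real.log |x - y|) volume (x - R) (x + R) := by
      have h := ((intervalIntegrable_log_abs (-R) R).comp_sub_left x).symm
      simpa only [sub_neg_eq_add] using h
    have hlI : IntegrableOn (fun y => Real.log |x - y|) (Icc (x - R) (x + R)) := by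
      rw [integrableOn_Icc_iff_integrableOn_Ioc]
      rw [intervalIntegrable_iff, uIoc_of_le (by linarith [le_max_right R₀ 0, le_max_left R₀ 0] : x - R ≤ x + R)] at hli
      exact hli
    have hmeas : AEStronglyMeasurable (fun y => Real.log |x - y| * φ y)
        (volume.restrict (Icc (x - R) (x + R))) := by
      exact ((Real.measurable_log.comp ((measurable_const.sub measurable_id).abs)).mul
        hc.measurable).aestronglyMeasurable.restrict
    apply Integrable.mono' ((hlI.norm).const_mul C) hmeas
    refine (ae_restrict_iff' measurableSet_Icc).2 (ae_of_all _ fun y _ => ?_)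
    rw [Real.norm_eq_abs, abs_mul]
    have h1 := hC y
    rw [Real.norm_eq_abs] at h1
    have h2 : abs (Real.log (abs (x - y))) * abs (φ y)
        ≤ abs (Real.log (abs (x - y))) * C :=
      mul_le_mul_of_nonneg_left h1 (abs_nonneg _)
    rw [Real.norm_eq_abs, mul_comm C]
    exact h2
  have heq : (fun y => Real.log |x - y| * φ y)
      = (Icc (x - R) (x + R)).indicator (fun y => Real.log |x - y| * φ y) := by
    ext y
    by_cases h : y ∈ Icc (x - R) (x + R)
    · rw [indicator_of_mem h]
    · rw [indicator_of_notMem h, hzero y h, mul_zero]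
  rw [heq]
  exact hint.integrable_indicator measurableSet_Icc

private lemma ibp_log (f : ℝ → ℝ) (hf : ContDiff ℝ 1 f) (x a b : ℝ) (hx : x ∉ Set.uIcc a b) :
    ∫ y in a..b, f y / (x - y)
      = f a * Real.log |x - a| - f b * Real.log |x - b|
        + ∫ y in a..b, Real.log |x - y| * deriv f y := by
  have hne : ∀ y ∈ Set.uIcc a b, x - y ≠ 0 := by
    intro y hy h
    rw [sub_eq_zero] at h
    exact hx (h ▸ hy)
  have hu : ∀ y ∈ Set.uIcc a b, HasDerivAt f (deriv f y) y := fun y _ =>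
    ((hf.differentiable one_ne_zero) y).hasDerivAt
  have hv : ∀ y ∈ Set.uIcc a b, HasDerivAt (fun t => Real.log (x - t)) (-(x - y)⁻¹) y := by
    intro y hy
    have h1 : HasDerivAt (fun t : ℝ => x - t) (-1) y := (hasDerivAt_id y).const_sub x
    have h2 := (Real.hasDerivAt_log (hne y hy)).comp y h1
    simpa [Function.comp_def] using h2
  have hu' : IntervalIntegrable (deriv f) volume a b :=
    (hf.continuous_deriv le_rfl).intervalIntegrable a b
  have hv' : IntervalIntegrable (fun y => -(x - y)⁻¹) volume a b := by
    apply ContinuousOn.intervalIntegrable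
    exact (((continuous_const.sub continuous_id).continuousOn).inv₀ hne).neg
  have key := intervalIntegral.integral_mul_deriv_eq_deriv_mul hu hv hu' hv'
  have e1 : ∫ y in a..b, f y / (x - y) = -∫ y in a..b, f y * -(x - y)⁻¹ := by
    rw [← intervalIntegral.integral_neg]
    apply intervalIntegral.integral_congr
    intro y _
    ring
  rw [e1, key]
  have e2 : ∫ y in a..b, deriv f y * Real.log (x - y)
      = ∫ y in a..b, Real.log |x - y| * deriv f y := by
    apply intervalIntegral.integral_congr
    intro y _
    show deriv f y * Real.log (x - y) = Real.log |x - y| * deriv f y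
    rw [Real.log_abs, mul_comm]
  rw [← e2, Real.log_abs, Real.log_abs]
  ring

private lemma split_integral (g : ℝ → ℝ) (x R ε : ℝ) (hε : 0 < ε) (hεR : ε < R)
    (h1 : IntegrableOn g (Set.Iic (x - ε)))
    (h2 : IntegrableOn g (Set.Ici (x + ε)))
    (hg1 : ∀ y, y ≤ x - R → g y = 0)
    (hg2 : ∀ y, x + R ≤ y → g y = 0) :
    ∫ y in {y : ℝ | ε ≤ |x - y|}, g y
      = (∫ y in (x - R)..(x - ε), g y) + ∫ y in (x + ε)..(x + R), g y := by
  have hset : {y : ℝ | ε ≤ |x - y|} = Set.Iic (x - ε) ∪ Set.Ici (x + ε) := by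
    ext y
    simp only [Set.mem_setOf_eq, Set.mem_union, Set.mem_Iic, Set.mem_Ici, le_abs]
    constructor
    · rintro (h | h)
      · left; linarith
      · right; linarith
    · rintro (h | h)
      · left; linarith
      · right; linarith
  have hdisj : Disjoint (Set.Iic (x - ε)) (Set.Ici (x + ε)) := by
    rw [Set.disjoint_left]
    intro y hy1 hy2
    simp only [Set.mem_Iic] at hy1
    simp only [Set.mem_Ici] at hy2
    linarith
  rw [hset, setIntegral_union hdisj measurableSet_Ici h1 h2]
  congr 1
  · have hsplit : Set.Iic (x - ε) = Set.Iic (x - R) ∪ Set.Ioc (x - R) (x - ε) :=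
      (Set.Iic_union_Ioc_eq_Iic (by linarith)).symm
    rw [hsplit, setIntegral_union (Set.Iic_disjoint_Ioc le_rfl) measurableSet_Ioc
        (h1.mono_set (by rw [hsplit]; exact Set.subset_union_left))
        (h1.mono_set (by rw [hsplit]; exact Set.subset_union_right)),
      setIntegral_eq_zero_of_forall_eq_zero (fun y (hy : y ∈ Set.Iic (x - R)) => hg1 y hy),
      zero_add,
      intervalIntegral.integral_of_le (by linarith)]
  · have hsplit : Set.Ici (x + ε) = Set.Icc (x + ε) (x + R) ∪ Set.Ioi (x + R) :=
      (Set.Icc_union_Ioi_eq_Ici (by linarith)).symm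
    have hdisj2 : Disjoint (Set.Icc (x + ε) (x + R)) (Set.Ioi (x + R)) := by
      rw [Set.disjoint_left]
      intro y hy1 hy2
      simp only [Set.mem_Icc] at hy1
      simp only [Set.mem_Ioi] at hy2
      linarith
    rw [hsplit, setIntegral_union hdisj2 measurableSet_Ioi
        (h2.mono_set (by rw [hsplit]; exact Set.subset_union_left))
        (h2.mono_set (by rw [hsplit]; exact Set.subset_union_right)),
      setIntegral_eq_zero_of_forall_eq_zero
        (fun y (hy : y ∈ Set.Ioi (x + R)) => hg2 y (le_of_lt hy)), add_zero,
      intervalIntegral.integral_of_le (by linarith), integral_Icc_eq_integral_Ioc]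

/-- **Hilbert transform of the second form (real logarithmic kernel).**
For `f` continuously differentiable with compact support,
`∫_ℝ ln|x − y| f'(y) dy` equals the principal-value Hilbert integral
`lim_{ε→0⁺} ∫_{|x − y| ≥ ε} f(y)/(x − y) dy`. -/
theorem log_kernel_eq_pv_hilbert
    (f : ℝ → ℝ) (hf : ContDiff ℝ 1 f) (hfc : HasCompactSupport f) (x : ℝ) :
    Tendsto (fun ε : ℝ => ∫ y in {y : ℝ | ε ≤ |x - y|}, f y / (x - y))
      (𝓝[>] 0) (𝓝 (∫ y : ℝ, Real.log |x - y| * deriv f y)) := by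
  have hf1 : Continuous f := hf.continuous
  have hfd : Continuous (deriv f) := hf.continuous_deriv le_rfl
  -- choose R with f and deriv f vanishing outside (x-R, x+R)
  obtain ⟨R₀, hR₀⟩ := hfc.isCompact.isBounded.subset_closedBall x
  set R : ℝ := max R₀ 0 + 1 with hRdef
  have hR1 : (1:ℝ) ≤ R := by
    have := le_max_right R₀ 0
    simp only [hRdef]; linarith
  have hnot : ∀ y : ℝ, y ≤ x - R ∨ x + R ≤ y → y ∉ tsupport f := by
    intro y hy hmem
    have h := hR₀ hmem
    rw [Metric.mem_closedBall, Real.dist_eq] at h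
    rcases abs_le.1 h with ⟨hl, hr⟩
    have h1 : R₀ ≤ max R₀ 0 := le_max_left _ _
    rcases hy with h2 | h2 <;> (simp only [hRdef] at h2; linarith)
  have hfzero : ∀ y : ℝ, y ≤ x - R ∨ x + R ≤ y → f y = 0 := fun y hy =>
    image_eq_zero_of_notMem_tsupport (hnot y hy)
  have hfdzero : ∀ y : ℝ, y ≤ x - R ∨ x + R ≤ y → deriv f y = 0 := by
    intro y hy
    by_contra h
    exact hnot y hy (support_deriv_subset (by simpa using h))
  set g : ℝ → ℝ := fun y => Real.log |x - y| * deriv f y with hgdef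
  have hgint : Integrable g := integrable_log_kernel (deriv f) hfd hfc.deriv x
  obtain ⟨C, hC⟩ := hfc.deriv.exists_bound_of_continuous hfd
  -- boundary term tends to zero
  have hbdry : Tendsto (fun ε : ℝ => (f (x + ε) - f (x - ε)) * Real.log ε)
      (𝓝[>] 0) (𝓝 0) := by
    have key := tendsto_log_mul_rpow_nhdsGT_zero one_pos
    simp only [Real.rpow_one] at key
    have key2 : Tendsto (fun ε : ℝ => 2 * C * |Real.log ε * ε|) (𝓝[>] 0) (𝓝 0) := by
      have h1 := key.abs
      rw [abs_zero] at h1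
      simpa using h1.const_mul (2 * C)
    apply squeeze_zero_norm' _ key2
    filter_upwards [self_mem_nhdsWithin] with ε hε
    have hε0 : (0:ℝ) < ε := hε
    have hFTC : f (x + ε) - f (x - ε) = ∫ y in (x - ε)..(x + ε), deriv f y := by
      rw [intervalIntegral.integral_deriv_eq_sub
        (fun y _ => (hf.differentiable one_ne_zero y))
        (hfd.intervalIntegrable _ _)]
    have hbd : ‖∫ y in (x - ε)..(x + ε), deriv f y‖ ≤ C * |(x + ε) - (x - ε)| :=
      intervalIntegral.norm_integral_le_of_norm_le_const (fun y _ => hC y)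
    have hCnn : (0:ℝ) ≤ C := le_trans (norm_nonneg _) (hC x)
    rw [norm_mul, hFTC]
    calc ‖∫ y in (x - ε)..(x + ε), deriv f y‖ * ‖Real.log ε‖
        ≤ (C * |(x + ε) - (x - ε)|) * ‖Real.log ε‖ :=
          mul_le_mul_of_nonneg_right hbd (norm_nonneg _)
      _ = 2 * C * |Real.log ε * ε| := by
          rw [Real.norm_eq_abs, abs_mul]
          have : |(x + ε) - (x - ε)| = 2 * ε := by
            rw [show (x + ε) - (x - ε) = 2 * ε by ring, abs_of_pos (by linarith)]
          rw [this, abs_of_pos hε0]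
          ring
  -- tail tends to the full integral, by dominated convergence
  have htail : Tendsto (fun ε : ℝ => ∫ y in {y : ℝ | ε ≤ |x - y|}, g y)
      (𝓝[>] 0) (𝓝 (∫ y : ℝ, g y)) := by
    have hmeas : ∀ ε : ℝ, MeasurableSet {y : ℝ | ε ≤ |x - y|} := fun ε =>
      measurableSet_le measurable_const ((measurable_const.sub measurable_id).abs)
    have heq : (fun ε : ℝ => ∫ y in {y : ℝ | ε ≤ |x - y|}, g y)
        = fun ε : ℝ => ∫ y : ℝ, ({y : ℝ | ε ≤ |x - y|}).indicator g y := by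
      funext ε
      rw [integral_indicator (hmeas ε)]
    rw [heq]
    apply tendsto_integral_filter_of_dominated_convergence (fun y => ‖g y‖)
    · exact Eventually.of_forall fun ε =>
        (hgint.aestronglyMeasurable).indicator (hmeas ε)
    · exact Eventually.of_forall fun ε => ae_of_all _ fun y =>
        norm_indicator_le_norm_self g y
    · exact hgint.norm
    · have hxae : ∀ᵐ y : ℝ, y ≠ x := by
        rw [ae_iff]
        simp only [ne_eq, not_not, setOf_eq_eq_singleton]
        exact measure_singleton x
      filter_upwards [hxae] with y hy
      have hpos : 0 < |x - y| := abs_pos.2 (sub_ne_zero.2 (Ne.symm hy))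
      apply tendsto_const_nhds.congr'
      filter_upwards [Ioo_mem_nhdsGT_of_mem (Set.left_mem_Ico.2 hpos)] with ε hε
      rw [Set.indicator_of_mem (show y ∈ {y : ℝ | ε ≤ |x - y|} from le_of_lt hε.2) g]
  -- eventual identity via integration by parts
  have heq : ∀ᶠ ε : ℝ in 𝓝[>] 0,
      (f (x + ε) - f (x - ε)) * Real.log ε + ∫ y in {y : ℝ | ε ≤ |x - y|}, g y
        = ∫ y in {y : ℝ | ε ≤ |x - y|}, f y / (x - y) := by
    filter_upwards [Ioo_mem_nhdsGT_of_mem (Set.left_mem_Ico.2 (by linarith : (0:ℝ) < 1))]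
      with ε hε
    obtain ⟨hε0, hε1⟩ := hε
    have hεR : ε < R := lt_of_lt_of_le hε1 hR1
    -- split for f y / (x - y)
    have hcont1 : ContinuousOn (fun y => f y / (x - y)) (Set.Iic (x - ε)) := by
      apply hf1.continuousOn.div ((continuous_const.sub continuous_id).continuousOn)
      intro y hy
      have h2 : y ≤ x - ε := hy
      intro h
      rw [Pi.sub_apply, sub_eq_zero] at h
      simp only [id_eq] at h
      linarith
    have hcont2 : ContinuousOn (fun y => f y / (x - y)) (Set.Ici (x + ε)) := by
      apply hf1.continuousOn.div ((continuous_const.sub continuous_id).continuousOn)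
      intro y hy
      have h2 : x + ε ≤ y := hy
      intro h
      rw [Pi.sub_apply, sub_eq_zero] at h
      simp only [id_eq] at h
      linarith
    have hint1 : IntegrableOn (fun y => f y / (x - y)) (Set.Iic (x - ε)) := by
      have hIcc : IntegrableOn (fun y => f y / (x - y)) (Set.Icc (x - R) (x - ε)) :=
        (hcont1.mono (Set.Icc_subset_Iic_self)).integrableOn_Icc
      have : Set.Iic (x - ε) = Set.Iic (x - R) ∪ Set.Ioc (x - R) (x - ε) :=
        (Set.Iic_union_Ioc_eq_Iic (by linarith)).symm
      rw [this]
      refine IntegrableOn.union ?_ (hIcc.mono_set Set.Ioc_subset_Icc_self)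
      apply (integrableOn_zero (μ := volume)).congr_fun _ measurableSet_Iic
      intro y hy
      show (0:ℝ) = f y / (x - y)
      rw [hfzero y (Or.inl hy), zero_div]
    have hint2 : IntegrableOn (fun y => f y / (x - y)) (Set.Ici (x + ε)) := by
      have hIcc : IntegrableOn (fun y => f y / (x - y)) (Set.Icc (x + ε) (x + R)) :=
        (hcont2.mono (Set.Icc_subset_Ici_self)).integrableOn_Icc
      have : Set.Ici (x + ε) = Set.Icc (x + ε) (x + R) ∪ Set.Ioi (x + R) :=
        (Set.Icc_union_Ioi_eq_Ici (by linarith)).symm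
      rw [this]
      refine IntegrableOn.union (hIcc) ?_
      apply (integrableOn_zero (μ := volume)).congr_fun _ measurableSet_Ioi
      intro y hy
      show (0:ℝ) = f y / (x - y)
      rw [hfzero y (Or.inr (le_of_lt hy)), zero_div]
    have hzero1 : ∀ y : ℝ, y ≤ x - R → f y / (x - y) = 0 := fun y hy => by
      rw [hfzero y (Or.inl hy), zero_div]
    have hzero2 : ∀ y : ℝ, x + R ≤ y → f y / (x - y) = 0 := fun y hy => by
      rw [hfzero y (Or.inr hy), zero_div]
    have hgzero1 : ∀ y : ℝ, y ≤ x - R → g y = 0 := fun y hy => by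
      simp only [hgdef, hfdzero y (Or.inl hy), mul_zero]
    have hgzero2 : ∀ y : ℝ, x + R ≤ y → g y = 0 := fun y hy => by
      simp only [hgdef, hfdzero y (Or.inr hy), mul_zero]
    rw [split_integral (fun y => f y / (x - y)) x R ε hε0 hεR hint1 hint2 hzero1 hzero2,
      split_integral g x R ε hε0 hεR (hgint.integrableOn) (hgint.integrableOn)
        hgzero1 hgzero2]
    -- integration by parts on each side
    have hxnot1 : x ∉ Set.uIcc (x - R) (x - ε) := by
      rw [Set.uIcc_of_le (by linarith), Set.mem_Icc]
      intro h
      linarith [h.2]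
    have hxnot2 : x ∉ Set.uIcc (x + ε) (x + R) := by
      rw [Set.uIcc_of_le (by linarith), Set.mem_Icc]
      intro h
      linarith [h.1]
    rw [ibp_log f hf x (x - R) (x - ε) hxnot1, ibp_log f hf x (x + ε) (x + R) hxnot2]
    rw [hfzero (x - R) (Or.inl le_rfl), hfzero (x + R) (Or.inr le_rfl)]
    have habs1 : |x - (x - ε)| = ε := by
      rw [show x - (x - ε) = ε by ring, abs_of_pos hε0]
    have habs2 : |x - (x + ε)| = ε := by
      rw [show x - (x + ε) = -ε by ring, abs_neg, abs_of_pos hε0]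
    rw [habs1, habs2]
    simp only [hgdef]
    ring
  have hlim := hbdry.add htail
  rw [zero_add] at hlim
  exact hlim.congr' heq
end

section
/- Let f : ℝ → ℝ be continuously differentiable with compact support and let x ∈ ℝ. Using the principal branch of the complex logarithm (so that log(t) = ln|t| + iπ for real t < 0), one has (1/π) ∫_ℝ log((x − y : ℂ)) · f'(y) dy = (1/π) · lim_{ε→0⁺} ∫_{|x − y| ≥ ε} f(y)/(x − y) dy − i·f(x). Equivalently, the Hilbert transform of the second form equals the negative of the classical Hilbert transform plus a purely imaginary multiple of f arising from the argument of the logarithm on the half-line y > x. -/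
open MeasureTheory Filter Topology Real

/- Auxiliary: the real logarithm is interval integrable on `[0,1]` (despite the
singularity at `0`). -/
lemma aux_intervalIntegrable_log_01 :
    IntervalIntegrable Real.log MeasureTheory.volume 0 1 := by
  have h : IntervalIntegrable (fun y : ℝ => -Real.log y) MeasureTheory.volume 0 1 := by
    apply intervalIntegral.intervalIntegrable_deriv_of_nonneg
      (g := fun y : ℝ => y - y * Real.log y)
    · exact (continuous_id.sub Real.continuous_mul_log).continuousOn
    · intro y hy
      simp only [min_eq_left, max_eq_right, zero_le_one] at hy
      have h1 : HasDerivAt (fun y : ℝ => y - y * Real.log y) (1 - (Real.log y + 1)) y :=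
        (hasDerivAt_id y).sub (Real.hasDerivAt_mul_log (ne_of_gt hy.1))
      have : -Real.log y = 1 - (Real.log y + 1) := by ring
      rw [this]
      exact h1
    · intro y hy
      simp only [min_eq_left, max_eq_right, zero_le_one] at hy
      have := Real.log_nonpos hy.1.le hy.2.le
      linarith
  have h2 : Real.log = (-fun y : ℝ => -Real.log y) := by funext y; simp
  rw [h2]; exact h.neg

/- Auxiliary: the real logarithm is interval integrable on every interval. -/
lemma aux_intervalIntegrable_log (a b : ℝ) :
    IntervalIntegrable Real.log MeasureTheory.volume a b := by
  have key : ∀ c : ℝ, 0 ≤ c → IntervalIntegrable Real.log MeasureTheory.volume 0 c := by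
    intro c hc
    rcases le_or_gt c 1 with h | h
    · apply aux_intervalIntegrable_log_01.mono_set
      rw [Set.uIcc_of_le hc, Set.uIcc_of_le zero_le_one]
      exact Set.Icc_subset_Icc le_rfl h
    · refine aux_intervalIntegrable_log_01.trans (intervalIntegral.intervalIntegrable_log ?_)
      intro hm
      rw [Set.uIcc_of_le h.le] at hm
      linarith [hm.1]
  have key2 : ∀ c : ℝ, IntervalIntegrable Real.log MeasureTheory.volume 0 c := by
    intro c
    rcases le_or_gt 0 c with h | h
    · exact key c h
    · have h0 : IntervalIntegrable (fun y : ℝ => Real.log (0 - y))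
          MeasureTheory.volume (0 - (-c)) (0 - 0) := (key (-c) (by linarith)).symm.comp_sub_left 0
      have : (fun y : ℝ => Real.log (0 - y)) = Real.log := by
        funext y; rw [zero_sub, Real.log_neg_eq_log]
      rw [this] at h0
      simpa using h0.symm
  exact (key2 a).symm.trans (key2 b)

/- Auxiliary: integrability of `y ↦ log (x - y) * d y` for continuous compactly
supported `d`. -/
lemma aux_integrable_log_mul {x : ℝ} {d : ℝ → ℝ} (hd : Continuous d)
    (hds : HasCompactSupport d) :
    MeasureTheory.Integrable (fun y => Real.log (x - y) * d y) := by
  obtain ⟨r, hr1, hsub⟩ := hds.isBounded.subset_ball_lt 1 x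
  have hd0 : ∀ y, y ∉ Set.Ioo (x - r) (x + r) → d y = 0 := by
    intro y hy
    apply image_eq_zero_of_notMem_tsupport
    intro hc
    exact hy (by simpa [Real.ball_eq_Ioo] using hsub hc)
  have hlog : IntervalIntegrable (fun y => Real.log (x - y)) MeasureTheory.volume
      (x - r) (x + r) := by
    have := (aux_intervalIntegrable_log (x - (x - r)) (x - (x + r))).comp_sub_left x
    simpa using this
  have hle : x - r ≤ x + r := by linarith
  have hIoo : MeasureTheory.IntegrableOn (fun y => Real.log (x - y))
      (Set.Ioo (x - r) (x + r)) := by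
    rw [intervalIntegrable_iff_integrableOn_Ioo_of_le hle] at hlog
    exact hlog
  obtain ⟨C, hC⟩ := hds.exists_bound_of_continuous hd
  have hIOn : MeasureTheory.IntegrableOn (fun y => Real.log (x - y) * d y)
      (Set.Ioo (x - r) (x + r)) := by
    have := MeasureTheory.Integrable.bdd_mul (c := C) hIoo (hd.aestronglyMeasurable.restrict)
      (Filter.Eventually.of_forall fun y => hC y)
    exact (by simpa only [mul_comm] using this : MeasureTheory.Integrable
      (fun y => Real.log (x - y) * d y) (MeasureTheory.volume.restrict (Set.Ioo (x - r) (x + r))))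
  have heq : (fun y => Real.log (x - y) * d y)
      = (Set.Ioo (x - r) (x + r)).indicator (fun y => Real.log (x - y) * d y) := by
    symm
    rw [Set.indicator_eq_self]
    intro y hy
    by_contra hc
    simp only [Function.mem_support] at hy
    exact hy (by rw [hd0 y hc, mul_zero])
  rw [heq]
  exact (MeasureTheory.integrable_indicator_iff measurableSet_Ioo).mpr hIOn

/- Auxiliary: splitting the truncated principal-value integral into two interval
integrals, for a function vanishing outside `Ioo a b`. -/
lemma aux_split {φ : ℝ → ℝ} {x a b ε : ℝ} (hax : a < x - ε) (hxb : x + ε < b)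
    (hφ0 : ∀ y, y ∉ Set.Ioo a b → φ y = 0)
    (h1 : MeasureTheory.IntegrableOn φ (Set.Icc a (x - ε)))
    (h2 : MeasureTheory.IntegrableOn φ (Set.Icc (x + ε) b)) (hε : 0 < ε) :
    ∫ y in {y : ℝ | ε ≤ |x - y|}, φ y
      = (∫ y in a..(x - ε), φ y) + ∫ y in (x + ε)..b, φ y := by
  have hset : {y : ℝ | ε ≤ |x - y|} = Set.Iic (x - ε) ∪ Set.Ici (x + ε) := by
    ext y
    simp only [Set.mem_setOf_eq, Set.mem_union, Set.mem_Iic, Set.mem_Ici, le_abs]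
    constructor
    · rintro (h | h)
      · left; linarith
      · right; linarith
    · rintro (h | h)
      · left; linarith
      · right; linarith
  have hEq1 : Set.EqOn φ ((Set.Icc a (x - ε)).indicator φ) (Set.Iic (x - ε)) := by
    intro y hy
    by_cases hm : y ∈ Set.Icc a (x - ε)
    · rw [Set.indicator_of_mem hm]
    · rw [Set.indicator_of_notMem hm]
      exact hφ0 y fun hc => hm ⟨hc.1.le, hy⟩
  have hEq2 : Set.EqOn φ ((Set.Icc (x + ε) b).indicator φ) (Set.Ici (x + ε)) := by
    intro y hy
    by_cases hm : y ∈ Set.Icc (x + ε) b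
    · rw [Set.indicator_of_mem hm]
    · rw [Set.indicator_of_notMem hm]
      exact hφ0 y fun hc => hm ⟨hy, hc.2.le⟩
  have hI1 : MeasureTheory.IntegrableOn φ (Set.Iic (x - ε)) :=
    (((MeasureTheory.integrable_indicator_iff measurableSet_Icc).mpr h1).integrableOn).congr_fun
      (fun y hy => (hEq1 hy).symm) measurableSet_Iic
  have hI2 : MeasureTheory.IntegrableOn φ (Set.Ici (x + ε)) :=
    (((MeasureTheory.integrable_indicator_iff measurableSet_Icc).mpr h2).integrableOn).congr_fun
      (fun y hy => (hEq2 hy).symm) measurableSet_Ici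
  have e1 : ∫ y in Set.Iic (x - ε), φ y = ∫ y in a..(x - ε), φ y := by
    rw [MeasureTheory.setIntegral_congr_fun measurableSet_Iic hEq1,
      MeasureTheory.setIntegral_indicator measurableSet_Icc,
      Set.inter_eq_self_of_subset_right Set.Icc_subset_Iic_self,
      MeasureTheory.integral_Icc_eq_integral_Ioc,
      ← intervalIntegral.integral_of_le hax.le]
  have e2 : ∫ y in Set.Ici (x + ε), φ y = ∫ y in (x + ε)..b, φ y := by
    rw [MeasureTheory.setIntegral_congr_fun measurableSet_Ici hEq2,
      MeasureTheory.setIntegral_indicator measurableSet_Icc,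
      Set.inter_eq_self_of_subset_right Set.Icc_subset_Ici_self,
      MeasureTheory.integral_Icc_eq_integral_Ioc,
      ← intervalIntegral.integral_of_le hxb.le]
  rw [hset, MeasureTheory.setIntegral_union (Set.Iic_disjoint_Ici.mpr (by linarith))
    measurableSet_Ici hI1 hI2, e1, e2]

/-- **Paper's Corollary 2.4 (equivalence of the first and second forms).**
With the principal branch of the complex logarithm,
`(1/π) ∫_ℝ log(x − y) f'(y) dy = (1/π)·pv − i·f(x)`, where `pv` is the principal-value
Hilbert integral `lim_{ε→0⁺} ∫_{|x − y| ≥ ε} f(y)/(x − y) dy`; i.e. the Hilbert transform of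
the second form equals the negative of the classical Hilbert transform plus a purely imaginary
multiple of `f`. -/
theorem second_form_eq_neg_hilbert_add_imaginary
    (f : ℝ → ℝ) (hf : ContDiff ℝ 1 f) (hfc : HasCompactSupport f) (x : ℝ) :
    ∃ pv : ℝ,
      Tendsto (fun ε : ℝ => ∫ y in {y : ℝ | ε ≤ |x - y|}, f y / (x - y))
        (𝓝[>] 0) (𝓝 pv) ∧
      (1 / (Real.pi : ℂ)) * ∫ y : ℝ, Complex.log ((x : ℂ) - (y : ℂ)) * Complex.ofReal (deriv f y)
        = (1 / (Real.pi : ℂ)) * Complex.ofReal pv - Complex.I * Complex.ofReal (f x) := by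
  set d : ℝ → ℝ := deriv f with hd_def
  have hd : Continuous d := hf.continuous_deriv le_rfl
  have hds : HasCompactSupport d := hfc.deriv
  have hfco : Continuous f := hf.continuous
  obtain ⟨r, hr1, hsub⟩ := hfc.isBounded.subset_ball_lt 1 x
  set a : ℝ := x - r with ha_def
  set b : ℝ := x + r with hb_def
  have hf0 : ∀ y, y ∉ Set.Ioo a b → f y = 0 := by
    intro y hy
    apply image_eq_zero_of_notMem_tsupport
    intro hc
    have h1 := hsub hc
    rw [Real.ball_eq_Ioo] at h1
    exact hy h1
  have hd0 : ∀ y, y ∉ Set.Ioo a b → d y = 0 := by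
    intro y hy
    by_contra hc
    have h1 := hsub (support_deriv_subset (Function.mem_support.mpr hc))
    rw [Real.ball_eq_Ioo] at h1
    exact hy h1
  set g : ℝ → ℝ := fun y => Real.log (x - y) * d y with hg_def
  have hg : MeasureTheory.Integrable g := aux_integrable_log_mul hd hds
  refine ⟨∫ y, g y, ?_, ?_⟩
  · -- The principal value integral converges to `∫ g`.
    obtain ⟨C, hC⟩ := hds.exists_bound_of_continuous hd
    -- the a.e. set avoiding the singular point
    have hxne : ∀ᵐ y : ℝ, y ≠ x := by
      refine MeasureTheory.ae_iff.mpr ?_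
      simpa using MeasureTheory.measure_singleton (μ := MeasureTheory.volume) x
    -- DCT: truncated integrals of g converge
    have hGmeas : MeasureTheory.AEStronglyMeasurable g MeasureTheory.volume :=
      ((Real.measurable_log.comp (measurable_const.sub measurable_id)).mul
        hd.measurable).aestronglyMeasurable
    have hG : Tendsto (fun ε : ℝ => ∫ y in {y : ℝ | ε ≤ |x - y|}, g y)
        (𝓝[>] 0) (𝓝 (∫ y, g y)) := by
      have hsetmeas : ∀ ε : ℝ, MeasurableSet {y : ℝ | ε ≤ |x - y|} := by
        intro ε
        exact measurableSet_le measurable_const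
          ((measurable_const.sub measurable_id).abs)
      have : ∀ ε : ℝ, (∫ y in {y : ℝ | ε ≤ |x - y|}, g y)
          = ∫ y, ({y : ℝ | ε ≤ |x - y|}).indicator g y := by
        intro ε
        rw [MeasureTheory.integral_indicator (hsetmeas ε)]
      simp only [this]
      apply MeasureTheory.tendsto_integral_filter_of_dominated_convergence
        (fun y => |g y|)
      · exact Filter.Eventually.of_forall fun ε =>
          (hGmeas.indicator (hsetmeas ε))
      · refine Filter.Eventually.of_forall fun ε => ?_
        refine Filter.Eventually.of_forall fun y => ?_
        calc ‖({y : ℝ | ε ≤ |x - y|}).indicator g y‖ ≤ ‖g y‖ :=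
              norm_indicator_le_norm_self g y
          _ = |g y| := rfl
      · exact hg.abs
      · filter_upwards [hxne] with y hy
        have hpos : 0 < |x - y| := by
          rw [abs_pos]
          intro hc
          exact hy (by linarith [sub_eq_zero.mp hc])
        have hev : ∀ᶠ ε : ℝ in 𝓝[>] (0:ℝ),
            ({y : ℝ | ε ≤ |x - y|}).indicator g y = g y := by
          filter_upwards [Ioo_mem_nhdsGT_of_mem (Set.mem_Ico.mpr ⟨le_refl _, hpos⟩)]
            with ε hε
          exact Set.indicator_of_mem (by exact hε.2.le) g
        exact Tendsto.congr' (Filter.EventuallyEq.symm hev) tendsto_const_nhds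
    -- remainder term tends to 0
    have hrem : Tendsto (fun ε : ℝ => Real.log ε * (f (x + ε) - f (x - ε)))
        (𝓝[>] 0) (𝓝 0) := by
      have hbound : ∀ ε : ℝ, 0 < ε →
          ‖Real.log ε * (f (x + ε) - f (x - ε))‖ ≤ 2 * C * |ε * Real.log ε| := by
        intro ε hε
        have hdiff : ∀ y ∈ (Set.univ : Set ℝ), DifferentiableAt ℝ f y :=
          fun y _ => (hf.differentiable one_ne_zero) y
        have hlip := Convex.norm_image_sub_le_of_norm_deriv_le hdiff
          (fun y _ => hC y) convex_univ (Set.mem_univ (x - ε)) (Set.mem_univ (x + ε))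
        have h2 : ‖f (x + ε) - f (x - ε)‖ ≤ C * (2 * ε) := by
          calc ‖f (x + ε) - f (x - ε)‖ ≤ C * ‖(x + ε) - (x - ε)‖ := hlip
            _ = C * (2 * ε) := by
                congr 1
                rw [show (x + ε) - (x - ε) = 2 * ε by ring]
                rw [Real.norm_eq_abs, abs_of_pos (by linarith)]
        have hC0 : 0 ≤ C := le_trans (norm_nonneg _) (hC x)
        calc ‖Real.log ε * (f (x + ε) - f (x - ε))‖
            = |Real.log ε| * ‖f (x + ε) - f (x - ε)‖ := by
              rw [norm_mul]; rfl
          _ ≤ |Real.log ε| * (C * (2 * ε)) := by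
              exact mul_le_mul_of_nonneg_left h2 (abs_nonneg _)
          _ = 2 * C * (ε * |Real.log ε|) := by ring
          _ = 2 * C * |ε * Real.log ε| := by
              rw [abs_mul, abs_of_pos hε]
      have htend : Tendsto (fun ε : ℝ => 2 * C * |ε * Real.log ε|) (𝓝[>] 0) (𝓝 0) := by
        have h1 : Tendsto (fun ε : ℝ => ε * Real.log ε) (𝓝[>] 0) (𝓝 0) := by
          have := (Real.continuous_mul_log.tendsto 0).mono_left
            (nhdsWithin_le_nhds (s := Set.Ioi (0:ℝ)))
          simpa using this
        have := (h1.abs.const_mul (2 * C))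
        simpa using this
      apply squeeze_zero_norm' _ htend
      filter_upwards [self_mem_nhdsWithin] with ε hε
      exact hbound ε hε
    -- the identity between truncated integrals, for small ε
    have hkey : ∀ᶠ ε : ℝ in 𝓝[>] (0:ℝ),
        (∫ y in {y : ℝ | ε ≤ |x - y|}, f y / (x - y))
          = (∫ y in {y : ℝ | ε ≤ |x - y|}, g y)
            + Real.log ε * (f (x + ε) - f (x - ε)) := by
      filter_upwards [Ioo_mem_nhdsGT_of_mem (Set.mem_Ico.mpr ⟨le_refl _, zero_lt_one⟩)]
        with ε hε
      obtain ⟨hε0, hε1⟩ := hε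
      have hax : a < x - ε := by simp only [ha_def]; linarith
      have hxb : x + ε < b := by simp only [hb_def]; linarith
      -- continuity facts
      have hcont1 : ContinuousOn (fun y => Real.log (x - y)) (Set.Icc a (x - ε)) := by
        apply ContinuousOn.log
        · exact (continuous_const.sub continuous_id).continuousOn
        · intro y hy
          have : ε ≤ x - y := by
            have := hy.2; simp only [Set.mem_Icc] at hy; linarith [hy.2]
          exact ne_of_gt (lt_of_lt_of_le hε0 this)
      have hcont2 : ContinuousOn (fun y => Real.log (x - y)) (Set.Icc (x + ε) b) := by
        apply ContinuousOn.log
        · exact (continuous_const.sub continuous_id).continuousOn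
        · intro y hy
          simp only [Set.mem_Icc] at hy
          have : x - y ≤ -ε := by linarith [hy.1]
          exact ne_of_lt (lt_of_le_of_lt this (by linarith))
      have hcontphi1 : ContinuousOn (fun y => f y / (x - y)) (Set.Icc a (x - ε)) := by
        apply ContinuousOn.div hfco.continuousOn
          (continuous_const.sub continuous_id).continuousOn
        intro y hy
        simp only [Set.mem_Icc] at hy
        have : ε ≤ x - y := by linarith [hy.2]
        exact ne_of_gt (lt_of_lt_of_le hε0 this)
      have hcontphi2 : ContinuousOn (fun y => f y / (x - y)) (Set.Icc (x + ε) b) := by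
        apply ContinuousOn.div hfco.continuousOn
          (continuous_const.sub continuous_id).continuousOn
        intro y hy
        simp only [Set.mem_Icc] at hy
        have : x - y ≤ -ε := by linarith [hy.1]
        exact ne_of_lt (lt_of_le_of_lt this (by linarith))
      -- split of the pv integral
      have hsplitF := aux_split (φ := fun y => f y / (x - y)) hax hxb
        (fun y hy => by show f y / (x - y) = 0; rw [hf0 y hy, zero_div])
        (hcontphi1.integrableOn_Icc) (hcontphi2.integrableOn_Icc) hε0
      -- split of the g integral
      have hsplitG := aux_split (φ := g) hax hxb
        (fun y hy => by show Real.log (x - y) * d y = 0; rw [hd0 y hy, mul_zero])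
        ((hcont1.mul hd.continuousOn).integrableOn_Icc)
        ((hcont2.mul hd.continuousOn).integrableOn_Icc) hε0
      rw [hsplitF, hsplitG]
      -- integration by parts on each side
      have hderiv_u : ∀ y : ℝ, y ≠ x → HasDerivAt (fun y => Real.log (x - y)) (-(x - y)⁻¹) y := by
        intro y hy
        have h1 : HasDerivAt (fun y : ℝ => x - y) (-1) y := (hasDerivAt_id y).const_sub x
        have h2 := (Real.hasDerivAt_log (sub_ne_zero.mpr (Ne.symm hy))).comp y h1
        exact h2.congr_deriv (by ring)
      have hf_deriv : ∀ y : ℝ, HasDerivAt f (d y) y :=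
        fun y => ((hf.differentiable one_ne_zero) y).hasDerivAt
      -- left IBP
      have hibp1 : ∫ y in a..(x - ε), f y / (x - y)
          = (∫ y in a..(x - ε), g y) - Real.log ε * f (x - ε) := by
        have hne : ∀ y ∈ Set.uIcc a (x - ε), x - y ≠ 0 := by
          intro y hy
          rw [Set.uIcc_of_le hax.le] at hy
          simp only [Set.mem_Icc] at hy
          have : ε ≤ x - y := by linarith [hy.2]
          exact ne_of_gt (lt_of_lt_of_le hε0 this)
        have hu : ContinuousOn (fun y => Real.log (x - y)) (Set.uIcc a (x - ε)) := by
          rw [Set.uIcc_of_le hax.le]; exact hcont1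
        have hu' : IntervalIntegrable (fun y => -(x - y)⁻¹) MeasureTheory.volume a (x - ε) := by
          apply ContinuousOn.intervalIntegrable
          exact (((continuous_const.sub continuous_id).continuousOn).inv₀ hne).neg
        have hibp := intervalIntegral.integral_mul_deriv_eq_deriv_mul_of_hasDerivAt
          (u := fun y => Real.log (x - y)) (v := f) (u' := fun y => -(x - y)⁻¹) (v' := d)
          hu hfco.continuousOn
          (fun y hy => by
            apply hderiv_u
            rw [min_eq_left hax.le, max_eq_right hax.le] at hy
            simp only [Set.mem_Ioo] at hy
            intro hc; rw [hc] at hy; linarith [hy.2])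
          (fun y _ => hf_deriv y) hu' (hd.intervalIntegrable _ _)
        have hfa : f a = 0 := hf0 a (fun h => lt_irrefl a h.1)
        have hxval : x - (x - ε) = ε := by ring
        beta_reduce at hibp
        rw [hxval, hfa] at hibp
        have hnegint : ∫ y in a..(x - ε), -(x - y)⁻¹ * f y
            = -∫ y in a..(x - ε), f y / (x - y) := by
          rw [← intervalIntegral.integral_neg]
          apply intervalIntegral.integral_congr
          intro y _
          simp only [div_eq_mul_inv]
          ring
        rw [hnegint] at hibp
        -- hibp : ∫ log(x-y) * d y = log ε * f (x-ε) - 0 - (-∫ f/(x-y))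
        have : ∫ y in a..(x - ε), g y
            = Real.log ε * f (x - ε) + ∫ y in a..(x - ε), f y / (x - y) := by
          rw [hg_def]
          simp only
          rw [hibp]; ring
        linarith [this]
      -- right IBP
      have hibp2 : ∫ y in (x + ε)..b, f y / (x - y)
          = (∫ y in (x + ε)..b, g y) + Real.log ε * f (x + ε) := by
        have hne : ∀ y ∈ Set.uIcc (x + ε) b, x - y ≠ 0 := by
          intro y hy
          rw [Set.uIcc_of_le hxb.le] at hy
          simp only [Set.mem_Icc] at hy
          have : x - y ≤ -ε := by linarith [hy.1]
          exact ne_of_lt (lt_of_le_of_lt this (by linarith))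
        have hu : ContinuousOn (fun y => Real.log (x - y)) (Set.uIcc (x + ε) b) := by
          rw [Set.uIcc_of_le hxb.le]; exact hcont2
        have hu' : IntervalIntegrable (fun y => -(x - y)⁻¹) MeasureTheory.volume (x + ε) b := by
          apply ContinuousOn.intervalIntegrable
          exact (((continuous_const.sub continuous_id).continuousOn).inv₀ hne).neg
        have hibp := intervalIntegral.integral_mul_deriv_eq_deriv_mul_of_hasDerivAt
          (u := fun y => Real.log (x - y)) (v := f) (u' := fun y => -(x - y)⁻¹) (v' := d)
          hu hfco.continuousOn
          (fun y hy => by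
            apply hderiv_u
            rw [min_eq_left hxb.le, max_eq_right hxb.le] at hy
            simp only [Set.mem_Ioo] at hy
            intro hc; rw [hc] at hy; linarith [hy.1])
          (fun y _ => hf_deriv y) hu' (hd.intervalIntegrable _ _)
        have hfb : f b = 0 := hf0 b (fun h => lt_irrefl b h.2)
        have hxval : x - (x + ε) = -ε := by ring
        beta_reduce at hibp
        rw [hfb, hxval, Real.log_neg_eq_log] at hibp
        have hnegint : ∫ y in (x + ε)..b, -(x - y)⁻¹ * f y
            = -∫ y in (x + ε)..b, f y / (x - y) := by
          rw [← intervalIntegral.integral_neg]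
          apply intervalIntegral.integral_congr
          intro y _
          simp only [div_eq_mul_inv]
          ring
        rw [hnegint] at hibp
        have : ∫ y in (x + ε)..b, g y
            = -(Real.log ε * f (x + ε)) + ∫ y in (x + ε)..b, f y / (x - y) := by
          rw [hg_def]
          simp only
          rw [hibp]; ring
        linarith [this]
      rw [hibp1, hibp2]; ring
    have := (hG.add hrem)
    rw [add_zero] at this
    exact Tendsto.congr' (Filter.EventuallyEq.symm hkey) this
  · -- The complex identity.
    have hxne : ∀ᵐ y : ℝ, y ≠ x := by
      refine MeasureTheory.ae_iff.mpr ?_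
      simpa using MeasureTheory.measure_singleton (μ := MeasureTheory.volume) x
    have heq : (fun y : ℝ => Complex.log ((x : ℂ) - (y : ℂ)) * Complex.ofReal (d y))
        =ᵐ[MeasureTheory.volume]
        (fun y : ℝ => ((Real.log (x - y) * d y : ℝ) : ℂ)
          + (Set.Ioi x).indicator (fun y : ℝ => (Real.pi : ℂ) * Complex.I * (d y : ℂ)) y) := by
      filter_upwards [hxne] with y hy
      have hcast : ((x : ℂ) - (y : ℂ)) = ((x - y : ℝ) : ℂ) := by push_cast; ring
      rcases lt_or_gt_of_ne hy with h | h
      · -- y < x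
        have hxy : (0 : ℝ) < x - y := by linarith
        rw [hcast, ← Complex.ofReal_log hxy.le,
          Set.indicator_of_notMem (by simp only [Set.mem_Ioi]; linarith)]
        push_cast
        ring
      · -- y > x
        have hxy : x - y < 0 := by linarith
        have hlog : Complex.log ((x - y : ℝ) : ℂ)
            = ((Real.log (x - y) : ℝ) : ℂ) + (Real.pi : ℂ) * Complex.I := by
          rw [Complex.log, Complex.norm_real, Real.norm_eq_abs, Complex.arg_ofReal_of_neg hxy, Real.log_abs]
        rw [hcast, hlog, Set.indicator_of_mem (by simp only [Set.mem_Ioi]; linarith)]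
        push_cast
        ring
    have hdint : MeasureTheory.Integrable d := hd.integrable_of_hasCompactSupport hds
    have hint1 : MeasureTheory.Integrable (fun y : ℝ => ((Real.log (x - y) * d y : ℝ) : ℂ)) :=
      hg.ofReal
    have hint2 : MeasureTheory.Integrable
        ((Set.Ioi x).indicator (fun y : ℝ => (Real.pi : ℂ) * Complex.I * (d y : ℂ))) := by
      apply MeasureTheory.Integrable.indicator _ measurableSet_Ioi
      exact (hdint.ofReal).const_mul _
    have hIoi : ∫ y in Set.Ioi x, d y = -f x := hfc.integral_Ioi_deriv_eq hf x
    have hmain : ∫ y : ℝ, Complex.log ((x : ℂ) - (y : ℂ)) * Complex.ofReal (d y)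
        = Complex.ofReal (∫ y, g y) + (Real.pi : ℂ) * Complex.I * Complex.ofReal (-f x) := by
      rw [MeasureTheory.integral_congr_ae heq, MeasureTheory.integral_add hint1 hint2]
      congr 1
      · exact integral_ofReal
      · rw [MeasureTheory.integral_indicator measurableSet_Ioi,
          MeasureTheory.integral_const_mul, ← hIoi]
        congr 1
        exact integral_ofReal
    rw [hmain]
    have hπ : (Real.pi : ℂ) ≠ 0 := Complex.ofReal_ne_zero.mpr Real.pi_ne_zero
    field_simp
    push_cast
    ring
end

section
/- Let z ∈ ℂ, R > 0, and let f : ℂ → ℂ be complex differentiable on an open set containing the closed disc {w : |w − z| ≤ R}. Then, with log denoting the principal branch of the complex logarithm, −(1/(2πi)) ∮_{|w − z| = R} log(z − w) · f'(w) dw = f(z) − f(z + R), where the contour is the circle of radius R about z traversed once counterclockwise. -/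
open MeasureTheory Metric

/-- **Line integral with a logarithmic kernel (paper's Lemma 2.6, precise form).**
If `f` is complex differentiable on an open set containing the closed disc of radius `R`
about `z`, then, with `log` the principal branch of the complex logarithm,
`−(1/(2πi)) ∮_{|w−z|=R} log(z − w) f'(w) dw = f(z) − f(z + R)`,
the circle being traversed once counterclockwise. -/
theorem log_kernel_contour_integral
    (z : ℂ) (R : ℝ) (hR : 0 < R) (f : ℂ → ℂ) (U : Set ℂ) (hU : IsOpen U)
    (hsub : closedBall z R ⊆ U) (hf : DifferentiableOn ℂ f U) :
    -(1 / (2 * Real.pi * Complex.I)) *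
        (∮ w in C(z, R), Complex.log (z - w) * deriv f w)
      = f z - f (z + R) := by
  have hπ : (0:ℝ) < Real.pi := Real.pi_pos
  set π : ℝ := Real.pi with hπdef
  set w : ℝ → ℂ := circleMap z R with hwdef
  have hmem : ∀ θ : ℝ, w θ ∈ U := fun θ =>
    hsub (circleMap_mem_closedBall z hR.le θ)
  -- continuity of deriv f on U
  have hana : AnalyticOnNhd ℂ f U := hf.analyticOnNhd hU
  have hg : ContinuousOn (deriv f) U := hana.deriv.continuousOn
  -- derivative of h θ = f (w θ)
  have hderiv : ∀ θ : ℝ, HasDerivAt (fun t => f (w t))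
      (deriv f (w θ) * (circleMap 0 R θ * Complex.I)) θ := by
    intro θ
    have h1 : HasDerivAt f (deriv f (w θ)) (w θ) :=
      (hf.differentiableAt (hU.mem_nhds (hmem θ))).hasDerivAt
    exact h1.comp θ (hasDerivAt_circleMap z R θ)
  have hcgw : Continuous fun θ => deriv f (w θ) :=
    hg.comp_continuous (continuous_circleMap z R) hmem
  have hcont_h' : Continuous fun θ => deriv f (w θ) * (circleMap 0 R θ * Complex.I) :=
    hcgw.mul ((continuous_circleMap 0 R).mul continuous_const)
  have hcont_h : Continuous fun θ => f (w θ) :=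
    (hf.continuousOn.comp_continuous (continuous_circleMap z R) hmem)
  have hInt_h' : ∀ a b : ℝ, IntervalIntegrable
      (fun θ => deriv f (w θ) * (circleMap 0 R θ * Complex.I)) volume a b :=
    fun a b => hcont_h'.intervalIntegrable a b
  -- ∫ h' = 0
  have hint0 : ∫ θ in (0:ℝ)..(2*π), deriv f (w θ) * (circleMap 0 R θ * Complex.I) = 0 := by
    rw [intervalIntegral.integral_eq_sub_of_hasDerivAt (fun θ _ => hderiv θ)
      (hInt_h' 0 (2*π))]
    have : w (2*π) = w 0 := by
      simpa using (periodic_circleMap z R).eq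
    rw [this]
    ring
  -- mean value: ∫ f(w θ) = 2π f z
  have hmean : ∫ θ in (0:ℝ)..(2*π), f (w θ) = (2*π) * f z := by
    have hd : DiffContOnCl ℂ f (ball z R) := by
      refine DifferentiableOn.diffContOnCl ?_
      rw [closure_ball z hR.ne']
      exact hf.mono hsub
    have hc := hd.circleIntegral_sub_inv_smul (mem_ball_self hR)
    rw [circleIntegral] at hc
    simp only [deriv_circleMap, circleMap_sub_center, smul_eq_mul] at hc
    have heq : ∀ θ : ℝ, circleMap 0 R θ * Complex.I * ((circleMap 0 R θ)⁻¹ * f (circleMap z R θ))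
        = Complex.I * f (circleMap z R θ) := by
      intro θ
      have h0 : circleMap 0 R θ ≠ 0 := circleMap_ne_center hR.ne' (c := 0) (θ := θ) |>.trans_eq rfl
      field_simp
    rw [intervalIntegral.integral_congr (fun θ _ => heq θ),
      intervalIntegral.integral_const_mul] at hc
    have hI : (Complex.I : ℂ) ≠ 0 := Complex.I_ne_zero
    have : Complex.I * ∫ θ in (0:ℝ)..(2*π), f (w θ) = Complex.I * ((2*π) * f z) := by
      rw [hc]; push_cast; ring
    exact mul_left_cancel₀ hI this
  -- integration by parts: ∫ θ * h' = 2π f(z+R) - ∫ h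
  have hw2π : w (2*π) = z + R := by
    have : w (2*π) = w 0 := by simpa using (periodic_circleMap z R).eq
    rw [this, hwdef]
    simp [circleMap]
  have hibp : ∫ θ in (0:ℝ)..(2*π), (θ:ℂ) * (deriv f (w θ) * (circleMap 0 R θ * Complex.I))
      = (2*π) * f (z + R) - ∫ θ in (0:ℝ)..(2*π), f (w θ) := by
    have := intervalIntegral.integral_mul_deriv_eq_deriv_mul
      (u := fun θ : ℝ => (θ:ℂ)) (u' := fun _ => (1:ℂ))
      (v := fun θ => f (w θ))
      (v' := fun θ => deriv f (w θ) * (circleMap 0 R θ * Complex.I))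
      (a := 0) (b := 2*π)
      (fun x _ => (hasDerivAt_id (x:ℂ)).comp_ofReal)
      (fun x _ => hderiv x)
      ((continuous_const).intervalIntegrable 0 (2*π))
      (hInt_h' 0 (2*π))
    beta_reduce at this
    rw [this, hw2π]
    simp only [one_mul, Complex.ofReal_zero, zero_mul, sub_zero, Complex.ofReal_mul,
      Complex.ofReal_ofNat]
  -- the log identity on (0, 2π)
  have hlog : ∀ θ ∈ Set.Ioo (0:ℝ) (2*π),
      Complex.log (z - w θ) = (Real.log R : ℂ) + ((θ:ℂ) - (π:ℝ)) * Complex.I := by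
    intro θ hθ
    have hzw : z - w θ = Complex.exp ((Real.log R : ℂ) + ((θ:ℂ) - (π:ℝ)) * Complex.I) := by
      rw [Complex.exp_add, ← Complex.ofReal_exp, hwdef]
      simp only [circleMap]
      rw [Real.exp_log hR, sub_mul, Complex.exp_sub, Complex.exp_pi_mul_I]
      push_cast
      field_simp
      ring
    rw [hzw, Complex.log_exp]
    · simp only [Complex.add_im, Complex.ofReal_im, Complex.mul_im, Complex.sub_im,
        Complex.sub_re, Complex.ofReal_re, Complex.I_re, Complex.I_im]
      simp
      linarith [hθ.1]
    · simp only [Complex.add_im, Complex.ofReal_im, Complex.mul_im, Complex.sub_im,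
        Complex.sub_re, Complex.ofReal_re, Complex.I_re, Complex.I_im]
      simp
      linarith [hθ.2]
  -- rewrite the circle integral
  have hmain : (∮ w' in C(z, R), Complex.log (z - w') * deriv f w')
      = Complex.I * (2*π) * (f (z + R) - f z) := by
    rw [circleIntegral]
    simp only [deriv_circleMap, smul_eq_mul]
    have hae : ∀ᵐ θ : ℝ, θ ∈ Set.uIoc (0:ℝ) (2*π) →
        circleMap 0 R θ * Complex.I * (Complex.log (z - w θ) * deriv f (w θ))
        = ((Real.log R : ℂ) + ((θ:ℂ) - (π:ℝ)) * Complex.I)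
            * (deriv f (w θ) * (circleMap 0 R θ * Complex.I)) := by
      have h2 : ∀ᵐ θ : ℝ, θ ≠ 2*π := by
        rw [MeasureTheory.ae_iff]
        simpa using measure_singleton (2*π : ℝ)
      filter_upwards [h2] with θ hθ2 hθ
      rw [Set.uIoc_of_le (by positivity)] at hθ
      have hθ' : θ ∈ Set.Ioo (0:ℝ) (2*π) := ⟨hθ.1, lt_of_le_of_ne hθ.2 hθ2⟩
      rw [hlog θ hθ']
      ring
    rw [intervalIntegral.integral_congr_ae hae]
    have hsplit : ∀ θ : ℝ, ((Real.log R : ℂ) + ((θ:ℂ) - (π:ℝ)) * Complex.I)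
            * (deriv f (w θ) * (circleMap 0 R θ * Complex.I))
        = ((Real.log R : ℂ) - (π:ℝ) * Complex.I)
            * (deriv f (w θ) * (circleMap 0 R θ * Complex.I))
          + Complex.I * ((θ:ℂ) * (deriv f (w θ) * (circleMap 0 R θ * Complex.I))) := by
      intro θ; ring
    rw [intervalIntegral.integral_congr (fun θ _ => hsplit θ)]
    have hcθ : Continuous fun θ : ℝ =>
        (θ:ℂ) * (deriv f (w θ) * (circleMap 0 R θ * Complex.I)) :=
      Complex.continuous_ofReal.mul hcont_h'
    rw [intervalIntegral.integral_add
      ((hInt_h' 0 (2*π)).const_mul _)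
      ((hcθ.intervalIntegrable 0 (2*π)).const_mul _)]
    rw [intervalIntegral.integral_const_mul, intervalIntegral.integral_const_mul, hint0]
    have : (∫ θ in (0:ℝ)..(2*π), (θ:ℂ) * (deriv f (w θ) * (circleMap 0 R θ * Complex.I)))
        = (2*π) * f (z + R) - (2*π) * f z := by rw [hibp, hmean]
    rw [this]
    ring
  rw [hmain]
  have hπ0 : (π:ℂ) ≠ 0 := by exact_mod_cast hπ.ne'
  have hI : (Complex.I : ℂ) ≠ 0 := Complex.I_ne_zero
  field_simp
  ring
end

section
/- Let f : ℝ → ℝ be continuously differentiable with compact support. Then the logarithmic potential L(x) = ∫_ℝ ln|x − y| · f(y) dy is differentiable at every x ∈ ℝ, and L'(x) = lim_{ε→0⁺} ∫_{|x − y| ≥ ε} f(y)/(x − y) dy, the principal-value Hilbert integral of f at x. -/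
open MeasureTheory Filter Topology Set
open scoped Convolution

lemma neg_log_le (s : ℝ) (hs : 0 < s) : -Real.log s ≤ 2 * s ^ (-(2⁻¹ : ℝ)) := by
  have hu : (0:ℝ) < s ^ ((2⁻¹:ℝ)) := Real.rpow_pos_of_pos hs _
  have h1 : Real.log ((s ^ ((2⁻¹:ℝ)))⁻¹) ≤ (s ^ ((2⁻¹:ℝ)))⁻¹ - 1 :=
    Real.log_le_sub_one_of_pos (by positivity)
  rw [Real.log_inv, Real.log_rpow hs] at h1
  have h2 : (s ^ ((2⁻¹:ℝ)))⁻¹ = s ^ (-(2⁻¹:ℝ)) := (Real.rpow_neg hs.le _).symm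
  nlinarith [h1, h2, hu]

lemma integrableOn_log_abs_Ioc {R : ℝ} (hR : 0 < R) :
    IntegrableOn (fun t : ℝ => Real.log |t|) (Set.Ioc 0 R) := by
  have hrpow : IntegrableOn (fun t : ℝ => t ^ (-(2⁻¹ : ℝ))) (Set.Ioc 0 R) := by
    have := intervalIntegral.intervalIntegrable_rpow' (a := 0) (b := R)
      (r := -(2⁻¹:ℝ)) (by norm_num)
    rwa [intervalIntegrable_iff_integrableOn_Ioc_of_le hR.le] at this
  have hg : IntegrableOn (fun t : ℝ => 2 * t ^ (-(2⁻¹ : ℝ)) + |Real.log R|)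
      (Set.Ioc 0 R) := by
    exact (hrpow.const_mul 2).add (integrableOn_const measure_Ioc_lt_top.ne)
  refine Integrable.mono' hg ?_ ?_
  · exact ((Real.measurable_log.comp measurable_abs).aestronglyMeasurable).restrict
  · rw [ae_restrict_iff' measurableSet_Ioc]
    filter_upwards with t ht
    obtain ⟨ht0, htR⟩ := ht
    rw [Real.norm_eq_abs, abs_of_pos ht0]
    rcases le_or_gt t 1 with h1 | h1
    · have hlog : Real.log t ≤ 0 := Real.log_nonpos ht0.le h1
      rw [abs_of_nonpos hlog]
      have := neg_log_le t ht0
      have : (0:ℝ) ≤ |Real.log R| := abs_nonneg _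
      linarith [neg_log_le t ht0]
    · have hlog : 0 ≤ Real.log t := Real.log_nonneg h1.le
      rw [abs_of_nonneg hlog]
      have h2 : Real.log t ≤ Real.log R := Real.log_le_log ht0 htR
      have h3 : Real.log R ≤ |Real.log R| := le_abs_self _
      have h4 : (0:ℝ) ≤ 2 * t ^ (-(2⁻¹ : ℝ)) := by positivity
      linarith

lemma integrableOn_log_abs_Icc {R : ℝ} (hR : 0 < R) :
    IntegrableOn (fun t : ℝ => Real.log |t|) (Set.Icc (-R) R) := by
  have hI : IntervalIntegrable (fun t : ℝ => Real.log |t|) volume 0 R := by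
    rw [intervalIntegrable_iff_integrableOn_Ioc_of_le hR.le]
    exact integrableOn_log_abs_Ioc hR
  have hneg : IntervalIntegrable (fun t : ℝ => Real.log |t|) volume (-R) 0 := by
    have := (IntervalIntegrable.iff_comp_neg (by simp)).mp hI
    simp only [abs_neg, neg_zero] at this
    exact this.symm
  have := hneg.trans hI
  rwa [intervalIntegrable_iff_integrableOn_Icc_of_le (by linarith)] at this

lemma locallyIntegrable_log_abs :
    MeasureTheory.LocallyIntegrable (fun t : ℝ => Real.log |t|) volume := by
  rw [MeasureTheory.locallyIntegrable_iff]
  intro K hK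
  obtain ⟨R, hR⟩ := hK.isBounded.subset_closedBall 0
  refine (integrableOn_log_abs_Icc (R := max R 1) (by positivity)).mono_set ?_
  refine subset_trans hR ?_
  rw [Real.closedBall_eq_Icc]
  intro y hy
  simp only [zero_sub, zero_add, Set.mem_Icc] at hy ⊢
  constructor <;> [linarith [le_max_left R 1]; linarith [le_max_left R 1]]

lemma trunc_split {x M ε : ℝ} (hε : 0 < ε) (hεM : ε ≤ M) {h : ℝ → ℝ}
    (hcont : ContinuousOn h {x}ᶜ)
    (hz : ∀ y, M ≤ |x - y| → h y = 0) :
    ∫ y in {y : ℝ | ε ≤ |x - y|}, h y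
      = (∫ y in (x - M)..(x - ε), h y) + ∫ y in (x + ε)..(x + M), h y := by
  have hS : {y : ℝ | ε ≤ |x - y|} = Set.Iic (x - ε) ∪ Set.Ici (x + ε) := by
    ext y
    simp only [Set.mem_setOf_eq, Set.mem_union, Set.mem_Iic, Set.mem_Ici, le_abs]
    constructor
    · rintro (h | h)
      · left; linarith
      · right; linarith
    · rintro (h | h)
      · left; linarith
      · right; linarith
  have hsub1 : Set.Icc (x - M) (x - ε) ⊆ ({x}ᶜ : Set ℝ) := by
    intro y hy; simp only [Set.mem_compl_iff, Set.mem_singleton_iff]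
    intro hxy; rw [hxy] at hy; exact absurd hy.2 (by linarith)
  have hsub2 : Set.Icc (x + ε) (x + M) ⊆ ({x}ᶜ : Set ℝ) := by
    intro y hy; simp only [Set.mem_compl_iff, Set.mem_singleton_iff]
    intro hxy; rw [hxy] at hy; exact absurd hy.1 (by linarith)
  have hInt1 : IntegrableOn h (Set.Icc (x - M) (x - ε)) := (hcont.mono hsub1).integrableOn_Icc
  have hInt2 : IntegrableOn h (Set.Icc (x + ε) (x + M)) := (hcont.mono hsub2).integrableOn_Icc
  have hIic : ∫ y in Set.Iic (x - ε), h y = ∫ y in Set.Icc (x - M) (x - ε), h y := by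
    apply MeasureTheory.setIntegral_eq_of_subset_of_forall_diff_eq_zero measurableSet_Iic
    · exact fun y hy => hy.2
    · intro y hy
      obtain ⟨hy1, hy2⟩ := hy
      simp only [Set.mem_Iic] at hy1
      have : y < x - M := by
        by_contra hc
        exact hy2 ⟨by linarith, hy1⟩
      exact hz y (by rw [abs_of_pos (by linarith)]; linarith)
  have hIci : ∫ y in Set.Ici (x + ε), h y = ∫ y in Set.Icc (x + ε) (x + M), h y := by
    apply MeasureTheory.setIntegral_eq_of_subset_of_forall_diff_eq_zero measurableSet_Ici
    · exact fun y hy => hy.1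
    · intro y hy
      obtain ⟨hy1, hy2⟩ := hy
      simp only [Set.mem_Ici] at hy1
      have : x + M < y := by
        by_contra hc
        exact hy2 ⟨hy1, by linarith⟩
      exact hz y (by rw [abs_of_neg (by linarith)]; linarith)
  have hIntIic : IntegrableOn h (Set.Iic (x - ε)) := by
    have hdu : Set.Iic (x - ε) = (Set.Iic (x - ε) \ Set.Icc (x - M) (x - ε))
        ∪ Set.Icc (x - M) (x - ε) := by
      rw [Set.diff_union_of_subset (fun y hy => hy.2)]
    rw [hdu]
    refine MeasureTheory.IntegrableOn.union ?_ hInt1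
    refine (integrableOn_congr_fun ?_ (measurableSet_Iic.diff measurableSet_Icc)).2
      integrableOn_zero
    intro y hy
    obtain ⟨hy1, hy2⟩ := hy
    simp only [Set.mem_Iic] at hy1
    have : y < x - M := by
      by_contra hc
      exact hy2 ⟨by linarith, hy1⟩
    exact hz y (by rw [abs_of_pos (by linarith)]; linarith)
  have hIntIci : IntegrableOn h (Set.Ici (x + ε)) := by
    have hdu : Set.Ici (x + ε) = (Set.Ici (x + ε) \ Set.Icc (x + ε) (x + M))
        ∪ Set.Icc (x + ε) (x + M) := by
      rw [Set.diff_union_of_subset (fun y hy => hy.1)]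
    rw [hdu]
    refine MeasureTheory.IntegrableOn.union ?_ hInt2
    refine (integrableOn_congr_fun ?_ (measurableSet_Ici.diff measurableSet_Icc)).2
      integrableOn_zero
    intro y hy
    obtain ⟨hy1, hy2⟩ := hy
    simp only [Set.mem_Ici] at hy1
    have : x + M < y := by
      by_contra hc
      exact hy2 ⟨hy1, by linarith⟩
    exact hz y (by rw [abs_of_neg (by linarith)]; linarith)
  rw [hS, MeasureTheory.setIntegral_union ?_ measurableSet_Ici hIntIic hIntIci, hIic, hIci]
  · rw [intervalIntegral.integral_of_le (by linarith), intervalIntegral.integral_of_le (by linarith),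
      ← MeasureTheory.integral_Icc_eq_integral_Ioc, ← MeasureTheory.integral_Icc_eq_integral_Ioc]
  · rw [Set.disjoint_iff]
    intro y hy
    obtain ⟨h1, h2⟩ := hy
    simp only [Set.mem_Iic] at h1
    simp only [Set.mem_Ici] at h2
    exact absurd (le_trans h2 h1) (by simp; linarith)

lemma parts_log {x a b : ℝ} (hx : x ∉ Set.uIcc a b) (f g : ℝ → ℝ)
    (hfd : ∀ y, HasDerivAt f (g y) y) (hgcont : Continuous g) :
    ∫ y in a..b, Real.log |x - y| * g y
      = Real.log |x - b| * f b - Real.log |x - a| * f a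
        - ∫ y in a..b, (y - x)⁻¹ * f y := by
  have hne : ∀ y ∈ Set.uIcc a b, y ≠ x := fun y hy hyx => hx (hyx ▸ hy)
  have hIoo : Set.Ioo (min a b) (max a b) ⊆ Set.uIcc a b := by
    rw [← Set.Icc_min_max]; exact Set.Ioo_subset_Icc_self
  have hcontu : ContinuousOn (fun y => Real.log |x - y|) (Set.uIcc a b) := by
    intro y hy
    refine (ContinuousAt.continuousWithinAt ?_)
    refine (Real.continuousAt_log ?_).comp ((continuous_const.sub continuous_id).abs.continuousAt)
    simp only [abs_ne_zero, sub_ne_zero]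
    exact fun hc => hne y hy hc.symm
  have hcontu' : ContinuousOn (fun y : ℝ => (y - x)⁻¹) (Set.uIcc a b) := by
    refine ContinuousOn.inv₀ ((continuous_id.sub continuous_const).continuousOn) ?_
    exact fun y hy => sub_ne_zero.2 (hne y hy)
  have hderu : ∀ y ∈ Set.Ioo (min a b) (max a b),
      HasDerivAt (fun y => Real.log |x - y|) ((y - x)⁻¹) y := by
    intro y hy
    have hyx : x - y ≠ 0 := by
      intro hc
      exact hne y (hIoo hy) (by linarith [sub_eq_zero.1 hc])
    have h1 : HasDerivAt (fun y : ℝ => Real.log (x - y)) ((x - y)⁻¹ * (0 - 1)) y :=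
      (Real.hasDerivAt_log hyx).comp y ((hasDerivAt_const y x).sub (hasDerivAt_id y))
    have h2 : (fun y : ℝ => Real.log (x - y)) = fun y => Real.log |x - y| := by
      funext t; rw [Real.log_abs]
    rw [h2] at h1
    convert h1 using 1
    rw [zero_sub, mul_neg_one, ← inv_neg, neg_sub]
  exact intervalIntegral.integral_mul_deriv_eq_deriv_mul_of_hasDerivAt
    hcontu (fun y _ => (hfd y).continuousAt.continuousWithinAt) hderu
    (fun y _ => hfd y)
    (hcontu'.intervalIntegrable) (hgcont.intervalIntegrable a b)

lemma conv_eq (f : ℝ → ℝ) (x : ℝ) :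
    ((fun t : ℝ => Real.log |t|) ⋆[ContinuousLinearMap.mul ℝ ℝ] f) x
      = ∫ y : ℝ, Real.log |x - y| * f y := by
  rw [MeasureTheory.convolution_def]
  have h := MeasureTheory.integral_sub_left_eq_self
    (fun t : ℝ => Real.log |t| * f (x - t)) volume x
  simp only [sub_sub_cancel] at h
  simp only [ContinuousLinearMap.mul_apply']
  exact h.symm

lemma hasDerivAt_logPot (f : ℝ → ℝ) (hf : ContDiff ℝ 1 f) (hfc : HasCompactSupport f) (x : ℝ) :
    HasDerivAt (fun x : ℝ => ∫ y : ℝ, Real.log |x - y| * f y)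
      (∫ y : ℝ, Real.log |x - y| * deriv f y) x := by
  have h := hfc.hasDerivAt_convolution_right (ContinuousLinearMap.mul ℝ ℝ)
    locallyIntegrable_log_abs hf x
  have hfun : (fun x : ℝ => ∫ y : ℝ, Real.log |x - y| * f y)
      = ((fun t : ℝ => Real.log |t|) ⋆[ContinuousLinearMap.mul ℝ ℝ] f) :=
    funext fun z => (conv_eq f z).symm
  rw [hfun, ← conv_eq (deriv f) x] at *
  exact h

lemma integrable_log_mul (x : ℝ) (g : ℝ → ℝ) (hg : Continuous g)
    (hgc : HasCompactSupport g) :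
    MeasureTheory.Integrable (fun y : ℝ => Real.log |x - y| * g y) := by
  obtain ⟨r, hr⟩ := hgc.isBounded.subset_closedBall x
  obtain ⟨C, hC⟩ := hgc.exists_bound_of_continuous hg
  set M : ℝ := max r 1 with hM
  have hM0 : 0 < M := lt_of_lt_of_le one_pos (le_max_right _ _)
  have hIlog : IntegrableOn (fun y : ℝ => Real.log |x - y|) (Set.Icc (x - M) (x + M)) := by
    have h1 : IntervalIntegrable (fun t : ℝ => Real.log |t|) volume (-M) M := by
      rw [intervalIntegrable_iff_integrableOn_Icc_of_le (by linarith)]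
      exact integrableOn_log_abs_Icc hM0
    have h2 := h1.comp_sub_left x
    have h3 : IntervalIntegrable (fun y : ℝ => Real.log |x - y|) volume (x - M) (x + M) := by
      have := h2.symm
      simpa [sub_neg_eq_add] using this
    rwa [intervalIntegrable_iff_integrableOn_Icc_of_le (by linarith)] at h3
  have hmeas : AEStronglyMeasurable (fun y : ℝ => Real.log |x - y| * g y) volume :=
    ((Real.measurable_log.comp ((measurable_const.sub measurable_id).abs)).mul
      hg.measurable).aestronglyMeasurable
  have hOn : IntegrableOn (fun y : ℝ => Real.log |x - y| * g y)
      (Set.Icc (x - M) (x + M)) := by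
    refine Integrable.mono' ((hIlog.norm).mul_const C) hmeas.restrict ?_
    filter_upwards with y
    rw [Real.norm_eq_abs, abs_mul, Real.norm_eq_abs]
    exact mul_le_mul_of_nonneg_left (hC y) (abs_nonneg _)
  refine (integrableOn_iff_integrable_of_support_subset ?_).1 hOn
  intro y hy
  simp only [Function.mem_support] at hy
  have hy' : g y ≠ 0 := fun hc => hy (by rw [hc, mul_zero])
  have hmem : y ∈ tsupport g := subset_closure (by simpa [Function.mem_support] using hy')
  have hdist := hr hmem
  rw [Metric.mem_closedBall, Real.dist_eq] at hdist
  have h1 : y - x ≤ r := le_trans (le_abs_self _) hdist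
  have h2 : -(y - x) ≤ r := le_trans (neg_le_abs _) hdist
  have hrM : r ≤ M := le_max_left _ _
  exact Set.mem_Icc.2 ⟨by linarith, by linarith⟩

lemma tendsto_trunc_log (x : ℝ) (g : ℝ → ℝ) (hg : Continuous g)
    (hgc : HasCompactSupport g) :
    Tendsto (fun ε : ℝ => ∫ y in {y : ℝ | ε ≤ |x - y|}, Real.log |x - y| * g y)
      (𝓝[>] 0) (𝓝 (∫ y : ℝ, Real.log |x - y| * g y)) := by
  set h : ℝ → ℝ := fun y => Real.log |x - y| * g y with hh
  have hint : MeasureTheory.Integrable h := integrable_log_mul x g hg hgc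
  have hmeasset : ∀ ε : ℝ, MeasurableSet {y : ℝ | ε ≤ |x - y|} := fun ε =>
    (isClosed_le continuous_const ((continuous_const.sub continuous_id).abs)).measurableSet
  have hrew : ∀ ε : ℝ, ∫ y in {y : ℝ | ε ≤ |x - y|}, h y
      = ∫ y : ℝ, ({y : ℝ | ε ≤ |x - y|}).indicator h y := fun ε =>
    (MeasureTheory.integral_indicator (hmeasset ε)).symm
  simp only [hrew]
  apply MeasureTheory.tendsto_integral_filter_of_dominated_convergence
    (bound := fun y => ‖h y‖)
  · filter_upwards with ε
    exact (hint.aestronglyMeasurable).indicator (hmeasset ε)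
  · filter_upwards with ε
    filter_upwards with y
    exact norm_indicator_le_norm_self h y
  · exact hint.norm
  · have hne : ∀ᵐ y : ℝ, y ≠ x := by
      rw [MeasureTheory.ae_iff]
      have : {y : ℝ | ¬y ≠ x} = {x} := by ext y; simp
      rw [this]
      exact measure_singleton x
    filter_upwards [hne] with y hy
    have habs : 0 < |x - y| := abs_pos.2 (sub_ne_zero.2 (Ne.symm hy))
    have hev : ∀ᶠ ε in 𝓝[>] (0:ℝ), ({y : ℝ | ε ≤ |x - y|}).indicator h y = h y := by
      filter_upwards [Ioo_mem_nhdsGT_of_mem ⟨le_refl (0:ℝ), habs⟩] with ε hε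
      exact Set.indicator_of_mem (show y ∈ {y : ℝ | ε ≤ |x - y|} from le_of_lt hε.2) h
    exact Tendsto.congr' (hev.mono fun ε hε => hε.symm) tendsto_const_nhds

/-- **Derivative of the logarithmic potential is the PV Hilbert integral (eq. (7), first part).**
For `f` continuously differentiable with compact support, the logarithmic potential
`L(x) = ∫_ℝ ln|x − y| f(y) dy` is differentiable at every `x`, with derivative equal to the
principal-value Hilbert integral `lim_{ε→0⁺} ∫_{|x − y| ≥ ε} f(y)/(x − y) dy`. -/
theorem logPotential_hasDerivAt_pv_hilbert
    (f : ℝ → ℝ) (hf : ContDiff ℝ 1 f) (hfc : HasCompactSupport f) :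
    ∀ x : ℝ, ∃ pv : ℝ,
      Tendsto (fun ε : ℝ => ∫ y in {y : ℝ | ε ≤ |x - y|}, f y / (x - y))
        (𝓝[>] 0) (𝓝 pv) ∧
      HasDerivAt (fun x : ℝ => ∫ y : ℝ, Real.log |x - y| * f y) pv x := by
  intro x
  have hgcont : Continuous (deriv f) := hf.continuous_deriv le_rfl
  have hgc : HasCompactSupport (deriv f) := hfc.deriv
  refine ⟨∫ y : ℝ, Real.log |x - y| * deriv f y, ?_, hasDerivAt_logPot f hf hfc x⟩
  obtain ⟨r, hr⟩ := hfc.isBounded.subset_closedBall x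
  set M : ℝ := max r 0 + 1 with hMdef
  have hM1 : (1:ℝ) ≤ M := by
    have := le_max_right r 0; simp only [hMdef]; linarith
  have hM0 : (0:ℝ) < M := by linarith
  have hrM : r < M := by
    have := le_max_left r 0; simp only [hMdef]; linarith
  have hfz : ∀ y, M ≤ |x - y| → f y = 0 := by
    intro y hy
    by_contra hc
    have hmem : y ∈ tsupport f := subset_closure (Function.mem_support.2 hc)
    have hd := hr hmem
    rw [Metric.mem_closedBall, Real.dist_eq] at hd
    rw [abs_sub_comm] at hy
    linarith
  have hgz : ∀ y, M ≤ |x - y| → deriv f y = 0 := by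
    intro y hy
    by_contra hc
    have hmem : y ∈ tsupport f := support_deriv_subset (Function.mem_support.2 hc)
    have hd := hr hmem
    rw [Metric.mem_closedBall, Real.dist_eq] at hd
    rw [abs_sub_comm] at hy
    linarith
  have hder : ∀ y, HasDerivAt f (deriv f y) y := fun y =>
    (hf.differentiable one_ne_zero y).hasDerivAt
  have hkey : ∀ ε : ℝ, ε ∈ Set.Ioo (0:ℝ) 1 →
      ∫ y in {y : ℝ | ε ≤ |x - y|}, f y / (x - y)
        = Real.log ε * (f (x + ε) - f (x - ε))
          + ∫ y in {y : ℝ | ε ≤ |x - y|}, Real.log |x - y| * deriv f y := by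
    intro ε hε
    obtain ⟨hε0, hε1⟩ := hε
    have hεM : ε ≤ M := by linarith
    have hcont1 : ContinuousOn (fun y => f y / (x - y)) ({x}ᶜ : Set ℝ) := by
      apply ContinuousOn.div hf.continuous.continuousOn
        ((continuous_const.sub continuous_id).continuousOn)
      intro y hy
      refine sub_ne_zero.2 fun hc => hy ?_
      simp only [Set.mem_singleton_iff]
      simpa using hc.symm
    have hcont2 : ContinuousOn (fun y => Real.log |x - y| * deriv f y)
        ({x}ᶜ : Set ℝ) := by
      apply ContinuousOn.mul ?_ hgcont.continuousOn
      intro y hy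
      refine ContinuousAt.continuousWithinAt ?_
      refine (Real.continuousAt_log ?_).comp
        ((continuous_const.sub continuous_id).abs.continuousAt)
      simp only [abs_ne_zero, sub_ne_zero]
      exact fun hc => hy (by simp [hc])
    have hz1 : ∀ y, M ≤ |x - y| → f y / (x - y) = 0 := fun y hy => by
      rw [hfz y hy, zero_div]
    have hz2 : ∀ y, M ≤ |x - y| → Real.log |x - y| * deriv f y = 0 := fun y hy => by
      rw [hgz y hy, mul_zero]
    rw [trunc_split hε0 hεM hcont1 hz1, trunc_split hε0 hεM hcont2 hz2]
    have hxnot1 : x ∉ Set.uIcc (x - M) (x - ε) := by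
      rw [Set.uIcc_of_le (by linarith)]
      intro hxin
      exact absurd hxin.2 (by simp; linarith)
    have hxnot2 : x ∉ Set.uIcc (x + ε) (x + M) := by
      rw [Set.uIcc_of_le (by linarith)]
      intro hxin
      exact absurd hxin.1 (by simp; linarith)
    have hp1 := parts_log hxnot1 f (deriv f) hder hgcont
    have hp2 := parts_log hxnot2 f (deriv f) hder hgcont
    have hflip : ∀ a b : ℝ, (∫ y in a..b, f y / (x - y))
        = - ∫ y in a..b, (y - x)⁻¹ * f y := by
      intro a b
      rw [← intervalIntegral.integral_neg]
      apply intervalIntegral.integral_congr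
      intro y _
      show f y / (x - y) = -((y - x)⁻¹ * f y)
      have hinv : (x - y)⁻¹ = -((y - x)⁻¹) := by rw [← inv_neg, neg_sub]
      rw [div_eq_mul_inv, hinv]
      ring
    have hf1 : f (x - M) = 0 := by
      apply hfz
      rw [show x - (x - M) = M by ring, abs_of_pos hM0]
    have hf2 : f (x + M) = 0 := by
      apply hfz
      rw [show x - (x + M) = -M by ring, abs_neg, abs_of_pos hM0]
    rw [hflip (x - M) (x - ε), hflip (x + ε) (x + M), hp1, hp2,
      show x - (x - ε) = ε by ring, show x - (x - M) = M by ring,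
      show x - (x + ε) = -ε by ring, show x - (x + M) = -M by ring,
      abs_neg, abs_neg, abs_of_pos hε0, abs_of_pos hM0, hf1, hf2]
    ring
  have hev : ∀ᶠ ε in 𝓝[>] (0:ℝ),
      (∫ y in {y : ℝ | ε ≤ |x - y|}, f y / (x - y))
        = Real.log ε * (f (x + ε) - f (x - ε))
          + ∫ y in {y : ℝ | ε ≤ |x - y|}, Real.log |x - y| * deriv f y := by
    filter_upwards [Ioo_mem_nhdsGT_of_mem ⟨le_refl (0:ℝ), one_pos⟩] with ε hε
    exact hkey ε hε
  refine Tendsto.congr' (hev.mono fun ε h => h.symm) ?_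
  have h2 := tendsto_trunc_log x (deriv f) hgcont hgc
  have h1 : Tendsto (fun ε : ℝ => Real.log ε * (f (x + ε) - f (x - ε)))
      (𝓝[>] (0:ℝ)) (𝓝 0) := by
    obtain ⟨C, hC⟩ := hf.lipschitzWith_of_hasCompactSupport hfc one_ne_zero
    have hbase : Tendsto (fun ε : ℝ => Real.log ε * ε) (𝓝[>] (0:ℝ)) (𝓝 0) := by
      have := tendsto_log_mul_rpow_nhdsGT_zero (r := 1) one_pos
      simpa [Real.rpow_one] using this
    have hg : Tendsto (fun ε : ℝ => 2 * (C:ℝ) * ‖Real.log ε * ε‖) (𝓝[>] (0:ℝ)) (𝓝 0) := by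
      have := (hbase.norm).const_mul (2 * (C:ℝ))
      simpa using this
    apply squeeze_zero_norm' ?_ hg
    filter_upwards [self_mem_nhdsWithin] with ε (hε : (0:ℝ) < ε)
    have hlip := hC.dist_le_mul (x + ε) (x - ε)
    rw [Real.dist_eq, Real.dist_eq, show x + ε - (x - ε) = 2 * ε by ring,
      abs_of_pos (by linarith : (0:ℝ) < 2 * ε)] at hlip
    rw [Real.norm_eq_abs, abs_mul, Real.norm_eq_abs, abs_mul, abs_of_pos hε]
    calc |Real.log ε| * |f (x + ε) - f (x - ε)|
        ≤ |Real.log ε| * ((C:ℝ) * (2 * ε)) :=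
          mul_le_mul_of_nonneg_left hlip (abs_nonneg _)
      _ = 2 * (C:ℝ) * (|Real.log ε| * ε) := by ring
  have := h1.add h2
  simpa using this
end
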